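/- Let t ≥ 1, let b_1, …, b_t be pairwise distinct positive reals, and let a_1, …, a_t be reals that are not all zero. Then the function h : ℝ → ℝ defined by h(x) = Σ_{i=1}^t a_i·b_i^{−x} has at most t real zeros. -/

import Mathlib

lemma rolle_count (f : ℝ → ℝ) (hf : Differentiable ℝ f) (n : ℕ)
    (hD : {x : ℝ | deriv f x = 0}.Finite) (hDn : {x : ℝ | deriv f x = 0}.ncard ≤ n) :
    {x : ℝ | f x = 0}.Finite ∧ {x : ℝ | f x = 0}.ncard ≤ n + 1 := by
  set Z := {x : ℝ | f x = 0} with hZ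
  -- every finset inside Z has card ≤ n+1
  have key : ∀ s : Finset ℝ, ↑s ⊆ Z → s.card ≤ n + 1 := by
    intro s hs
    by_contra hcard
    push_neg at hcard
    obtain ⟨s', hs's, hs'⟩ := Finset.exists_subset_card_eq (show n + 2 ≤ s.card by omega)
    have hs'Z : ↑s' ⊆ Z := (Finset.coe_subset.mpr hs's).trans hs
    let e := s'.orderIsoOfFin hs'
    -- between consecutive points of s', derivative vanishes
    have hroot : ∀ i : Fin (n + 1), ∃ c ∈ Set.Ioo (e i.castSucc : ℝ) (e i.succ : ℝ),
        deriv f c = 0 := by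
      intro i
      have hlt : (e i.castSucc : ℝ) < (e i.succ : ℝ) := by
        exact_mod_cast e.strictMono (Fin.castSucc_lt_succ : i.castSucc < i.succ)
      have h1 : f (e i.castSucc) = 0 := hs'Z (e i.castSucc).2
      have h2 : f (e i.succ) = 0 := hs'Z (e i.succ).2
      exact exists_deriv_eq_zero hlt (hf.continuous.continuousOn) (by rw [h1, h2])
    choose c hc hc0 using hroot
    have hmono : StrictMono c := by
      intro i j hij
      have h1 : (c i) < (e i.succ : ℝ) := (hc i).2
      have h2 : (e j.castSucc : ℝ) < c j := (hc j).1
      have h3 : (e i.succ : ℝ) ≤ (e j.castSucc : ℝ) := by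
        have : i.succ ≤ j.castSucc := by
          simp only [Fin.le_def, Fin.lt_def, Fin.val_succ, Fin.coe_castSucc] at *
          omega
        exact_mod_cast Subtype.coe_le_coe.mpr (e.monotone this)
      linarith
    -- the images form n+1 distinct zeros of deriv f
    have hsub : ↑(Finset.image c Finset.univ) ⊆ {x : ℝ | deriv f x = 0} := by
      intro x hx
      simp only [Finset.coe_image, Set.mem_image] at hx
      obtain ⟨i, _, rfl⟩ := hx
      exact hc0 i
    have hcard' : (Finset.image c Finset.univ).card = n + 1 := by
      rw [Finset.card_image_of_injective _ hmono.injective, Finset.card_univ, Fintype.card_fin]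
    have := Set.ncard_le_ncard hsub hD
    rw [Set.ncard_coe_finset, hcard'] at this
    omega
  constructor
  · by_contra hinf
    rw [← Set.not_infinite, not_not] at hinf
    obtain ⟨s, hsZ, hscard⟩ := hinf.exists_subset_card_eq (n + 2)
    have := key s hsZ
    omega
  · by_contra hle
    push_neg at hle
    have hfin : Z.Finite := by
      by_contra hinf
      rw [← Set.not_infinite, not_not] at hinf
      obtain ⟨s, hsZ, hscard⟩ := hinf.exists_subset_card_eq (n + 2)
      have := key s hsZ
      omega
    have := key hfin.toFinset (by simp)
    rw [Set.ncard_eq_toFinset_card _ hfin] at hle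
    omega

lemma exp_sum_hasDerivAt (m : ℕ) (a d : Fin m → ℝ) (x : ℝ) :
    HasDerivAt (fun y => ∑ i, a i * Real.exp (d i * y))
      (∑ i, a i * d i * Real.exp (d i * x)) x := by
  apply HasDerivAt.fun_sum
  intro i _
  have h1 : HasDerivAt (fun y : ℝ => d i * y) (d i) x := by
    simpa using (hasDerivAt_id x).const_mul (d i)
  have h2 : HasDerivAt (fun y : ℝ => Real.exp (d i * y)) (Real.exp (d i * x) * d i) x :=
    (Real.hasDerivAt_exp (d i * x)).comp x h1
  have := h2.const_mul (a i)
  convert this using 1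
  · rfl
  ring

lemma key_exp_sum : ∀ n : ℕ, ∀ (c a : Fin n → ℝ), Function.Injective c → (∃ i, a i ≠ 0) →
    {x : ℝ | ∑ i, a i * Real.exp (c i * x) = 0}.Finite ∧
    {x : ℝ | ∑ i, a i * Real.exp (c i * x) = 0}.ncard ≤ n := by
  intro n
  induction n with
  | zero => rintro c a _ ⟨i, _⟩; exact i.elim0
  | succ n ih =>
    intro c a hc ha
    set L := Fin.last n with hL
    set d : Fin (n + 1) → ℝ := fun i => c i - c L with hd
    have hdinj : Function.Injective d := fun i j h => hc (by simpa [hd] using h)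
    have hdL : d L = 0 := by simp [hd]
    -- same zero set
    have hset : {x : ℝ | ∑ i, a i * Real.exp (c i * x) = 0}
        = {x : ℝ | ∑ i, a i * Real.exp (d i * x) = 0} := by
      ext x
      simp only [Set.mem_setOf_eq]
      have heq : ∑ i, a i * Real.exp (d i * x)
          = Real.exp (-(c L * x)) * ∑ i, a i * Real.exp (c i * x) := by
        rw [Finset.mul_sum]
        refine Finset.sum_congr rfl fun i _ => ?_
        rw [← mul_assoc, mul_comm (Real.exp _) (a i), mul_assoc, ← Real.exp_add]
        simp only [hd]
        ring_nf
      constructor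
      · intro h; rw [heq, h, mul_zero]
      · intro h
        rw [heq, mul_eq_zero] at h
        rcases h with h | h
        · exact absurd h (Real.exp_ne_zero _)
        · exact h
    rw [hset]
    by_cases hA : ∃ i : Fin n, a i.castSucc * d i.castSucc ≠ 0
    · -- use Rolle counting with the derivative
      set g := fun x : ℝ => ∑ i, a i * Real.exp (d i * x) with hg
      have hdiff : Differentiable ℝ g := fun x => (exp_sum_hasDerivAt _ a d x).differentiableAt
      have hderiv : ∀ x, deriv g x = ∑ i : Fin n,
          (a i.castSucc * d i.castSucc) * Real.exp (d i.castSucc * x) := by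
        intro x
        rw [(exp_sum_hasDerivAt _ a d x).deriv, Fin.sum_univ_castSucc]
        simp [← hL, hdL]
      have hih := ih (fun i => d i.castSucc) (fun i => a i.castSucc * d i.castSucc)
        (fun i j h => Fin.castSucc_injective n (hdinj h)) hA
      have hDset : {x : ℝ | deriv g x = 0} = {x : ℝ | ∑ i : Fin n,
          (a i.castSucc * d i.castSucc) * Real.exp (d i.castSucc * x) = 0} := by
        ext x; simp [hderiv x]
      have := rolle_count g hdiff n (by rw [hDset]; exact hih.1) (by rw [hDset]; exact hih.2)
      exact this
    · -- all coefficients except the last vanish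
      push_neg at hA
      have haz : ∀ i : Fin n, a i.castSucc = 0 := by
        intro i
        have hdne : d i.castSucc ≠ 0 := by
          intro h
          have : i.castSucc = L := hdinj (by rw [h, hdL])
          exact absurd this (Fin.ne_of_lt (Fin.castSucc_lt_last i))
        have := hA i
        rcases mul_eq_zero.mp this with h | h
        · exact h
        · exact absurd h hdne
      have haL : a L ≠ 0 := by
        obtain ⟨i, hi⟩ := ha
        rcases Fin.eq_castSucc_or_eq_last i with ⟨j, rfl⟩ | rfl
        · exact absurd (haz j) hi
        · exact hi
      have hempty : {x : ℝ | ∑ i, a i * Real.exp (d i * x) = 0} = ∅ := by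
        ext x
        simp only [Set.mem_setOf_eq, Set.mem_empty_iff_false, iff_false]
        rw [Fin.sum_univ_castSucc]
        have : ∀ i : Fin n, a i.castSucc * Real.exp (d i.castSucc * x) = 0 := by
          intro i; rw [haz i, zero_mul]
        rw [Finset.sum_congr rfl (fun i _ => this i), Finset.sum_const, smul_zero, zero_add,
          hdL, zero_mul, Real.exp_zero, mul_one]
        exact haL
      rw [hempty]
      simp

/-- an exponential sum `h(x) = Σᵢ aᵢ·bᵢ^{−x}` with pairwise distinct
positive bases `bᵢ` and coefficients `aᵢ` not all zero has at most `t` real zeros. -/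
theorem stmt_12 (t : ℕ) (ht : 1 ≤ t) (b : Fin t → ℝ) (hbpos : ∀ i, 0 < b i)
    (hbinj : Function.Injective b) (a : Fin t → ℝ) (ha : ∃ i, a i ≠ 0) :
    {x : ℝ | ∑ i, a i * (b i) ^ (-x) = 0}.Finite ∧
    {x : ℝ | ∑ i, a i * (b i) ^ (-x) = 0}.ncard ≤ t := by
  have hrw : ∀ (i : Fin t) (x : ℝ), (b i) ^ (-x) = Real.exp ((-Real.log (b i)) * x) := by
    intro i x
    rw [Real.rpow_def_of_pos (hbpos i)]
    ring_nf
  have hset : {x : ℝ | ∑ i, a i * (b i) ^ (-x) = 0}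
      = {x : ℝ | ∑ i, a i * Real.exp ((-Real.log (b i)) * x) = 0} := by
    ext x
    simp only [Set.mem_setOf_eq]
    rw [Finset.sum_congr rfl (fun i _ => by rw [hrw i x])]
  rw [hset]
  apply key_exp_sum t (fun i => -Real.log (b i)) a _ ha
  intro i j h
  apply hbinj
  have hlog : Real.log (b i) = Real.log (b j) := by
    have : -Real.log (b i) = -Real.log (b j) := h
    linarith
  calc b i = Real.exp (Real.log (b i)) := (Real.exp_log (hbpos i)).symm
    _ = Real.exp (Real.log (b j)) := by rw [hlog]
    _ = b j := Real.exp_log (hbpos j)
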